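/- Let N > 0, Q > 0, ū ≥ 0, V₁ > ū, α ∈ (0,1). If Q < N/(V₁ − ū) and α < 1 − √((V₁ − ū)Q/N), then for every x₂ ∈ [0,1] and every p₁ ≥ 0, p₂ ≥ 0, one has V₁ − (1 − αx₂)·(N/Q)·(1 − αx₂²) − p₁ − p₂ < ū. In particular, under full participation x₁ = 1 − x₂ the user with sensitivity θ = 1 would get 5G+WiFi payoff strictly below the reservation payoff, so full market participation is impossible. -/

import Mathlib

/-- Proposition 3 of the paper (small capacity and small per-AP coverage):
if `Q < N/(V₁ − ū)` and `α < 1 − √((V₁ − ū)Q/N)`, then under full participation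
the boundary user `θ = 1` would get 5G+WiFi payoff strictly below `ū`, for any
`x₂ ∈ [0,1]` and any nonnegative prices; so full participation is impossible. -/
theorem stmt_11 (N Q ubar V₁ α : ℝ)
    (hN : 0 < N) (hQ : 0 < Q) (hubar : 0 ≤ ubar) (hV : ubar < V₁)
    (hα₀ : 0 < α) (hα₁ : α < 1)
    (hQsmall : Q < N / (V₁ - ubar))
    (hαsmall : α < 1 - Real.sqrt ((V₁ - ubar) * Q / N)) :
    ∀ x₂ ∈ Set.Icc (0 : ℝ) 1, ∀ p₁ p₂ : ℝ, 0 ≤ p₁ → 0 ≤ p₂ →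
      V₁ - (1 - α * x₂) * (N / Q) * (1 - α * x₂ ^ 2) - p₁ - p₂ < ubar := by
  intro x₂ hx p₁ p₂ hp₁ hp₂
  obtain ⟨hx0, hx1⟩ := hx
  set s : ℝ := (V₁ - ubar) * Q / N with hs_def
  have hV' : 0 < V₁ - ubar := by linarith
  have hs0 : 0 ≤ s := by positivity
  have hsq : Real.sqrt s ^ 2 = s := Real.sq_sqrt hs0
  have hsqrt0 : 0 ≤ Real.sqrt s := Real.sqrt_nonneg s
  have hlt : Real.sqrt s < 1 - α := by linarith
  have hs_lt : s < (1 - α) ^ 2 := by nlinarith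
  have hNQ : 0 < N / Q := by positivity
  have hkey : s * (N / Q) = V₁ - ubar := by
    field_simp [hs_def]
    rw [hs_def, div_mul_cancel₀ _ hN.ne']; ring
  have h1 : 1 - α ≤ 1 - α * x₂ := by nlinarith
  have h2 : 1 - α ≤ 1 - α * x₂ ^ 2 := by nlinarith
  have hpos : 0 < 1 - α := by linarith
  have hprod : (1 - α) ^ 2 ≤ (1 - α * x₂) * (1 - α * x₂ ^ 2) := by nlinarith
  have : V₁ - ubar < (1 - α * x₂) * (N / Q) * (1 - α * x₂ ^ 2) := by
    calc V₁ - ubar = s * (N / Q) := hkey.symm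
    _ < (1 - α) ^ 2 * (N / Q) := by exact mul_lt_mul_of_pos_right hs_lt hNQ
    _ ≤ (1 - α * x₂) * (1 - α * x₂ ^ 2) * (N / Q) :=
        mul_le_mul_of_nonneg_right hprod (le_of_lt hNQ)
    _ = (1 - α * x₂) * (N / Q) * (1 - α * x₂ ^ 2) := by ring
  linarith
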